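/- For any μ > 0 and any λ > 1, there exists a unique u ∈ (0,1) such that F_μ(u) = λ·u, where F_μ(u) = 1 - Φ(Φ⁻¹(1-u) - μ) and Φ is the standard normal CDF. -/

import Mathlib

open ProbabilityTheory

/-- The standard normal CDF. -/
noncomputable def Phi : ℝ → ℝ := fun x => ProbabilityTheory.cdf (gaussianReal 0 1) x

/-- The inverse of the standard normal CDF (on (0,1)). -/
noncomputable def PhiInv : ℝ → ℝ := Function.invFun Phi

/-- F_μ(u) = 1 - Φ(Φ⁻¹(1-u) - μ). -/
noncomputable def Fmu (μ u : ℝ) : ℝ := 1 - Phi (PhiInv (1 - u) - μ)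

open MeasureTheory Filter Set

noncomputable def phi : ℝ → ℝ := gaussianPDFReal 0 1

lemma continuous_phi : Continuous phi := by
  unfold phi
  rw [gaussianPDFReal_def]
  fun_prop

lemma phi_pos (x : ℝ) : 0 < phi x := gaussianPDFReal_pos 0 1 x one_ne_zero

lemma integrable_phi : Integrable phi := integrable_gaussianPDFReal 0 1

lemma Phi_eq_integral (x : ℝ) : Phi x = ∫ t in Set.Iic x, phi t := by
  unfold phi
  rw [Phi, cdf_eq_real, measureReal_def, gaussianReal_apply_eq_integral 0 one_ne_zero,
    ENNReal.toReal_ofReal]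
  exact setIntegral_nonneg measurableSet_Iic fun t _ => gaussianPDFReal_nonneg 0 1 t

lemma hasDerivAt_Phi (x : ℝ) : HasDerivAt Phi (phi x) x := by
  have key : Phi = fun y => Phi 0 + ∫ t in (0:ℝ)..y, phi t := by
    funext y
    rw [Phi_eq_integral, Phi_eq_integral]
    rw [← intervalIntegral.integral_Iic_sub_Iic integrable_phi.integrableOn
      integrable_phi.integrableOn]
    ring
  rw [key]
  exact (intervalIntegral.integral_hasDerivAt_right
    integrable_phi.intervalIntegrable
    (continuous_phi.stronglyMeasurableAtFilter _ _)
    continuous_phi.continuousAt).const_add _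

lemma continuous_Phi : Continuous Phi :=
  continuous_iff_continuousAt.2 fun x => (hasDerivAt_Phi x).continuousAt

lemma strictMono_Phi : StrictMono Phi := by
  apply strictMono_of_deriv_pos
  intro x
  rw [(hasDerivAt_Phi x).deriv]
  exact phi_pos x

lemma tendsto_Phi_atBot : Tendsto Phi atBot (nhds 0) := tendsto_cdf_atBot _
lemma tendsto_Phi_atTop : Tendsto Phi atTop (nhds 1) := tendsto_cdf_atTop _

lemma Phi_mem_Ioo (x : ℝ) : Phi x ∈ Set.Ioo (0:ℝ) 1 := by
  constructor
  · have h1 : Phi (x - 1) < Phi x := strictMono_Phi (by linarith)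
    have h2 : (0:ℝ) ≤ Phi (x - 1) := cdf_nonneg _ _
    linarith
  · have h1 : Phi x < Phi (x + 1) := strictMono_Phi (by linarith)
    have h2 : Phi (x + 1) ≤ 1 := cdf_le_one _ _
    linarith

lemma Phi_surj_Ioo {y : ℝ} (hy : y ∈ Set.Ioo (0:ℝ) 1) : ∃ x, Phi x = y := by
  obtain ⟨a, ha⟩ := (tendsto_Phi_atBot.eventually_lt_const hy.1).exists
  obtain ⟨b, hb⟩ := (tendsto_Phi_atTop.eventually_const_lt hy.2).exists
  have hab : a ≤ b := by
    by_contra hc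
    push_neg at hc
    exact absurd (strictMono_Phi hc) (by linarith)
  obtain ⟨x, _, hx⟩ := intermediate_value_Icc hab continuous_Phi.continuousOn
    ⟨le_of_lt ha, le_of_lt hb⟩
  exact ⟨x, hx⟩

lemma Phi_PhiInv {y : ℝ} (hy : y ∈ Set.Ioo (0:ℝ) 1) : Phi (PhiInv y) = y :=
  Function.invFun_eq (Phi_surj_Ioo hy)

lemma PhiInv_Phi (x : ℝ) : PhiInv (Phi x) = x :=
  Function.leftInverse_invFun strictMono_Phi.injective x

lemma phi_sub (μ x : ℝ) : phi (x - μ) = phi x * Real.exp (μ * x - μ ^ 2 / 2) := by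
  simp only [phi, gaussianPDFReal, NNReal.coe_one, mul_one, sub_zero]
  rw [mul_assoc, ← Real.exp_add]
  congr 1
  ring

noncomputable def hfun (μ lam : ℝ) : ℝ → ℝ :=
  fun x => lam * Phi x - Phi (x - μ) - (lam - 1)

lemma hasDerivAt_hfun (μ lam x : ℝ) :
    HasDerivAt (hfun μ lam) (phi x * (lam - Real.exp (μ * x - μ ^ 2 / 2))) x := by
  have h1 : HasDerivAt (fun y => Phi (y - μ)) (phi (x - μ)) x := by
    have := (hasDerivAt_Phi (x - μ)).comp x ((hasDerivAt_id x).sub_const μ)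
    rw [mul_one] at this
    exact this
  have := (((hasDerivAt_Phi x).const_mul lam).sub h1).sub_const (lam - 1)
  apply this.congr_deriv
  rw [phi_sub]
  ring

lemma deriv_hfun (μ lam x : ℝ) :
    deriv (hfun μ lam) x = phi x * (lam - Real.exp (μ * x - μ ^ 2 / 2)) :=
  (hasDerivAt_hfun μ lam x).deriv

lemma continuous_hfun (μ lam : ℝ) : Continuous (hfun μ lam) :=
  continuous_iff_continuousAt.2 fun x => (hasDerivAt_hfun μ lam x).continuousAt

section main
variable {μ lam : ℝ} (hμ : 0 < μ) (hlam : 1 < lam)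

noncomputable def x₀ (μ lam : ℝ) : ℝ := Real.log lam / μ + μ / 2

include hμ hlam in
lemma strictMonoOn_hfun : StrictMonoOn (hfun μ lam) (Set.Iic (x₀ μ lam)) := by
  apply strictMonoOn_of_deriv_pos (convex_Iic _) (continuous_hfun μ lam).continuousOn
  intro x hx
  rw [interior_Iic, Set.mem_Iio] at hx
  rw [deriv_hfun]
  apply mul_pos (phi_pos x)
  have : Real.exp (μ * x - μ ^ 2 / 2) < Real.exp (Real.log lam) := by
    apply Real.exp_lt_exp.2
    have : μ * x < μ * (x₀ μ lam) := by
      exact mul_lt_mul_of_pos_left hx hμ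
    rw [x₀] at this
    have h2 : μ * (Real.log lam / μ + μ / 2) = Real.log lam + μ ^ 2 / 2 := by
      field_simp
    nlinarith
  rw [Real.exp_log (by linarith)] at this
  linarith

include hμ hlam in
lemma strictAntiOn_hfun : StrictAntiOn (hfun μ lam) (Set.Ici (x₀ μ lam)) := by
  apply strictAntiOn_of_deriv_neg (convex_Ici _) (continuous_hfun μ lam).continuousOn
  intro x hx
  rw [interior_Ici, Set.mem_Ioi] at hx
  rw [deriv_hfun]
  apply mul_neg_of_pos_of_neg (phi_pos x)
  have : Real.exp (Real.log lam) < Real.exp (μ * x - μ ^ 2 / 2) := by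
    apply Real.exp_lt_exp.2
    have : μ * (x₀ μ lam) < μ * x := mul_lt_mul_of_pos_left hx hμ
    rw [x₀] at this
    have h2 : μ * (Real.log lam / μ + μ / 2) = Real.log lam + μ ^ 2 / 2 := by
      field_simp
    nlinarith
  rw [Real.exp_log (by linarith)] at this
  linarith

lemma tendsto_hfun_atBot : Tendsto (hfun μ lam) atBot (nhds (1 - lam)) := by
  have t0 : Tendsto (fun x : ℝ => x - μ) atBot atBot :=
    tendsto_atBot_add_const_right _ (-μ) tendsto_id
  have t1 : Tendsto (fun x => Phi (x - μ)) atBot (nhds 0) := tendsto_Phi_atBot.comp t0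
  have := ((tendsto_Phi_atBot.const_mul lam).sub t1).sub_const (lam - 1)
  have h : lam * 0 - 0 - (lam - 1) = 1 - lam := by ring
  rw [h] at this
  exact this

lemma tendsto_hfun_atTop : Tendsto (hfun μ lam) atTop (nhds 0) := by
  have t0 : Tendsto (fun x : ℝ => x - μ) atTop atTop :=
    tendsto_atTop_add_const_right _ (-μ) tendsto_id
  have t1 : Tendsto (fun x => Phi (x - μ)) atTop (nhds 1) := tendsto_Phi_atTop.comp t0
  have := ((tendsto_Phi_atTop.const_mul lam).sub t1).sub_const (lam - 1)
  have h : lam * 1 - 1 - (lam - 1) = 0 := by ring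
  rwa [h] at this

include hμ hlam in
lemma hfun_pos_of_ge {x : ℝ} (hx : x₀ μ lam ≤ x) : 0 < hfun μ lam x := by
  have h1 : hfun μ lam (x + 1) < hfun μ lam x :=
    strictAntiOn_hfun hμ hlam hx (by simp only [Set.mem_Ici]; linarith) (by linarith)
  have h2 : (0:ℝ) ≤ hfun μ lam (x + 1) := by
    apply le_of_tendsto (tendsto_hfun_atTop (μ := μ) (lam := lam))
    filter_upwards [eventually_ge_atTop (x + 1)] with y hy
    rcases eq_or_lt_of_le hy with h | h
    · rw [h]
    · exact le_of_lt (strictAntiOn_hfun hμ hlam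
        (by simp only [Set.mem_Ici]; linarith) (by simp only [Set.mem_Ici]; linarith) h)
  linarith

include hμ hlam in
lemma exists_unique_zero : ∃! x, hfun μ lam x = 0 := by
  obtain ⟨a, ha0, ha1⟩ :=
    (((tendsto_hfun_atBot (μ := μ) (lam := lam)).eventually_lt_const
      (show (1:ℝ) - lam < 0 by linarith)).and (eventually_lt_atBot (x₀ μ lam))).exists
  have hx0pos := hfun_pos_of_ge hμ hlam (le_refl (x₀ μ lam))
  obtain ⟨c, hc_mem, hc⟩ := intermediate_value_Icc ha1.le
    (continuous_hfun μ lam).continuousOn (show (0:ℝ) ∈ Set.Icc _ _ from ⟨ha0.le, hx0pos.le⟩)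
  refine ⟨c, hc, ?_⟩
  have key : ∀ x, hfun μ lam x = 0 → x ≤ x₀ μ lam := by
    intro x hx
    by_contra hgt
    push_neg at hgt
    exact absurd hx (ne_of_gt (hfun_pos_of_ge hμ hlam hgt.le))
  intro y hy
  exact (strictMonoOn_hfun hμ hlam).injOn (key y hy) (key c hc) (by rw [hy, hc])

end main

theorem stmt_10 (μ lam : ℝ) (hμ : 0 < μ) (hlam : 1 < lam) :
    ∃! u, u ∈ Set.Ioo (0:ℝ) 1 ∧ Fmu μ u = lam * u := by
  obtain ⟨c, hc, hcu⟩ := exists_unique_zero hμ hlam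
  refine ⟨1 - Phi c, ⟨?_, ?_⟩, ?_⟩
  · have := Phi_mem_Ioo c
    constructor <;> [linarith [this.2]; linarith [this.1]]
  · have h1 : (1:ℝ) - (1 - Phi c) = Phi c := by ring
    rw [Fmu, h1, PhiInv_Phi]
    rw [hfun] at hc
    linarith
  · rintro u ⟨⟨hu0, hu1⟩, heq⟩
    set x := PhiInv (1 - u) with hx
    have hmem : (1:ℝ) - u ∈ Set.Ioo (0:ℝ) 1 := ⟨by linarith, by linarith⟩
    have hPx : Phi x = 1 - u := Phi_PhiInv hmem
    have hzero : hfun μ lam x = 0 := by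
      rw [Fmu] at heq
      rw [hfun, hPx]
      simp only [Fmu, ← hx] at heq
      linarith
    have := hcu x hzero
    rw [this] at hPx
    linarith
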